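/- Let η̂ : SVB_n → ℤ[VB_n] be the desingularization map and let a ∈ ℤ (viewed as a·1 in ℤ[VB_n]). Then η̂^{-1}({a}) = {1} if a = 1, and η̂^{-1}({a}) = ∅ otherwise. In particular, if η̂(β) = 1 then β = 1 in SVB_n. -/

import Mathlib

namespace SVBPaper

/-- Generators of the singular virtual braid monoid: `s i` is `σ_i`, `si i` is `σ_i⁻¹`,
`r i` is `ρ_i`, `t i` is `τ_i`, for `1 ≤ i ≤ n-1` (encoded as `i : Fin (n-1)`). -/
inductive SVBGen (n : ℕ) : Type
  | s  : Fin (n - 1) → SVBGen n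
  | si : Fin (n - 1) → SVBGen n
  | r  : Fin (n - 1) → SVBGen n
  | t  : Fin (n - 1) → SVBGen n

/-- The index of a generator. -/
def SVBGen.idx {n : ℕ} : SVBGen n → Fin (n - 1)
  | s i => i
  | si i => i
  | r i => i
  | t i => i

/-- `|i - j| ≥ 2`. -/
def Far {n : ℕ} (i j : Fin (n - 1)) : Prop := (i : ℕ) + 2 ≤ j ∨ (j : ℕ) + 2 ≤ i

/-- The defining relations of the singular virtual braid monoid `SVB_n`. -/
inductive SVBRel (n : ℕ) : FreeMonoid (SVBGen n) → FreeMonoid (SVBGen n) → Prop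
  | comm (x y : SVBGen n) (h : Far x.idx y.idx) :
      SVBRel n (.of x * .of y) (.of y * .of x)
  | inv_right (i : Fin (n - 1)) : SVBRel n (.of (.s i) * .of (.si i)) 1
  | inv_left (i : Fin (n - 1)) : SVBRel n (.of (.si i) * .of (.s i)) 1
  | rho_sq (i : Fin (n - 1)) : SVBRel n (.of (.r i) * .of (.r i)) 1
  | braid_s (i : Fin (n - 1)) (h : (i : ℕ) + 1 < n - 1) :
      SVBRel n (.of (.s i) * .of (.s ⟨i + 1, h⟩) * .of (.s i))
        (.of (.s ⟨i + 1, h⟩) * .of (.s i) * .of (.s ⟨i + 1, h⟩))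
  | braid_r (i : Fin (n - 1)) (h : (i : ℕ) + 1 < n - 1) :
      SVBRel n (.of (.r i) * .of (.r ⟨i + 1, h⟩) * .of (.r i))
        (.of (.r ⟨i + 1, h⟩) * .of (.r i) * .of (.r ⟨i + 1, h⟩))
  | mixed_rs (i : Fin (n - 1)) (h : (i : ℕ) + 1 < n - 1) :
      SVBRel n (.of (.r i) * .of (.s ⟨i + 1, h⟩) * .of (.r i))
        (.of (.r ⟨i + 1, h⟩) * .of (.s i) * .of (.r ⟨i + 1, h⟩))
  | mixed_rt (i : Fin (n - 1)) (h : (i : ℕ) + 1 < n - 1) :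
      SVBRel n (.of (.r i) * .of (.t ⟨i + 1, h⟩) * .of (.r i))
        (.of (.r ⟨i + 1, h⟩) * .of (.t i) * .of (.r ⟨i + 1, h⟩))
  | ts (i : Fin (n - 1)) : SVBRel n (.of (.t i) * .of (.s i)) (.of (.s i) * .of (.t i))
  | sst (i : Fin (n - 1)) (h : (i : ℕ) + 1 < n - 1) :
      SVBRel n (.of (.s i) * .of (.s ⟨i + 1, h⟩) * .of (.t i))
        (.of (.t ⟨i + 1, h⟩) * .of (.s i) * .of (.s ⟨i + 1, h⟩))

/-- The singular virtual braid monoid on `n` strands. -/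
abbrev SVB (n : ℕ) : Type := PresentedMonoid (SVBRel n)

/-- `σ_i` in `SVB_n`. -/
def sσ {n : ℕ} (i : Fin (n - 1)) : SVB n := PresentedMonoid.of (SVBRel n) (.s i)
/-- `σ_i⁻¹` in `SVB_n`. -/
def sσi {n : ℕ} (i : Fin (n - 1)) : SVB n := PresentedMonoid.of (SVBRel n) (.si i)
/-- `ρ_i` in `SVB_n`. -/
def sρ {n : ℕ} (i : Fin (n - 1)) : SVB n := PresentedMonoid.of (SVBRel n) (.r i)
/-- `τ_i` in `SVB_n`. -/
def sτ {n : ℕ} (i : Fin (n - 1)) : SVB n := PresentedMonoid.of (SVBRel n) (.t i)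

/-- The `i`-th strand, as an element of `Fin n`. -/
def stA {n : ℕ} (i : Fin (n - 1)) : Fin n := ⟨i, by have := i.isLt; omega⟩
/-- The `(i+1)`-st strand, as an element of `Fin n`. -/
def stB {n : ℕ} (i : Fin (n - 1)) : Fin n := ⟨(i : ℕ) + 1, by have := i.isLt; omega⟩

/-- The transposition `(i, i+1)` in the symmetric group `S_n`. -/
def swapAdj {n : ℕ} (i : Fin (n - 1)) : Equiv.Perm (Fin n) := Equiv.swap (stA i) (stB i)


/-- Generators of the virtual braid group: `s i` is `σ_i`, `r i` is `ρ_i`. -/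
inductive VBGen (n : ℕ) : Type
  | s : Fin (n - 1) → VBGen n
  | r : Fin (n - 1) → VBGen n

def VBGen.idx {n : ℕ} : VBGen n → Fin (n - 1)
  | s i => i
  | r i => i

/-- The relators of the virtual braid group `VB_n`. -/
inductive VBRel (n : ℕ) : FreeGroup (VBGen n) → Prop
  | comm (x y : VBGen n) (h : Far x.idx y.idx) :
      VBRel n (.of x * .of y * (FreeGroup.of x)⁻¹ * (FreeGroup.of y)⁻¹)
  | rho_sq (i : Fin (n - 1)) : VBRel n (.of (.r i) * .of (.r i))
  | braid_s (i : Fin (n - 1)) (h : (i : ℕ) + 1 < n - 1) :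
      VBRel n (.of (.s i) * .of (.s ⟨i + 1, h⟩) * .of (.s i) *
        (FreeGroup.of (.s ⟨i + 1, h⟩) * FreeGroup.of (.s i) * FreeGroup.of (.s ⟨i + 1, h⟩))⁻¹)
  | braid_r (i : Fin (n - 1)) (h : (i : ℕ) + 1 < n - 1) :
      VBRel n (.of (.r i) * .of (.r ⟨i + 1, h⟩) * .of (.r i) *
        (FreeGroup.of (.r ⟨i + 1, h⟩) * FreeGroup.of (.r i) * FreeGroup.of (.r ⟨i + 1, h⟩))⁻¹)
  | mixed_rs (i : Fin (n - 1)) (h : (i : ℕ) + 1 < n - 1) :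
      VBRel n (.of (.r i) * .of (.s ⟨i + 1, h⟩) * .of (.r i) *
        (FreeGroup.of (.r ⟨i + 1, h⟩) * FreeGroup.of (.s i) * FreeGroup.of (.r ⟨i + 1, h⟩))⁻¹)

/-- The virtual braid group on `n` strands. -/
abbrev VB (n : ℕ) : Type := PresentedGroup {w | VBRel n w}

/-- `σ_i` in `VB_n`. -/
def vσ {n : ℕ} (i : Fin (n - 1)) : VB n := PresentedGroup.of (.s i)
/-- `ρ_i` in `VB_n`. -/
def vρ {n : ℕ} (i : Fin (n - 1)) : VB n := PresentedGroup.of (.r i)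



section Aux

variable {n : ℕ}

open PresentedMonoid PresentedGroup

/-- Soundness of relations in the presented monoid. -/
lemma mrel {a b : FreeMonoid (SVBGen n)} (h : SVBRel n a b) :
    PresentedMonoid.mk (SVBRel n) a = PresentedMonoid.mk (SVBRel n) b :=
  Quotient.sound (ConGen.Rel.of a b h)

lemma sσ_mul_sσi (i : Fin (n - 1)) : (sσ i) * (sσi i) = (1 : SVB n) :=
  mrel (SVBRel.inv_right i)

lemma sσi_mul_sσ (i : Fin (n - 1)) : (sσi i) * (sσ i) = (1 : SVB n) :=
  mrel (SVBRel.inv_left i)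

lemma sρ_mul_sρ (i : Fin (n - 1)) : (sρ i) * (sρ i) = (1 : SVB n) :=
  mrel (SVBRel.rho_sq i)

/-- `σ_i` as a unit of `SVB n`. -/
def uσ (i : Fin (n - 1)) : (SVB n)ˣ := ⟨sσ i, sσi i, sσ_mul_sσi i, sσi_mul_sσ i⟩
/-- `ρ_i` as a unit of `SVB n`. -/
def uρ (i : Fin (n - 1)) : (SVB n)ˣ := ⟨sρ i, sρ i, sρ_mul_sρ i, sρ_mul_sρ i⟩

/-- Images of the virtual braid generators in the units of `SVB n`. -/
def uGen : VBGen n → (SVB n)ˣ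
  | .s i => uσ i
  | .r i => uρ i

/-- Corresponding singular generator of a virtual generator. -/
def toS : VBGen n → SVBGen n
  | .s i => .s i
  | .r i => .r i

lemma toS_idx (x : VBGen n) : (toS x).idx = x.idx := by cases x <;> rfl

lemma uGen_val (x : VBGen n) :
    (uGen x : SVB n) = PresentedMonoid.of (SVBRel n) (toS x) := by
  cases x <;> rfl

lemma uGen_rels : ∀ r ∈ {w | VBRel n w}, FreeGroup.lift uGen r = 1 := by
  rintro r hr
  cases hr with
  | comm x y h =>
    simp only [map_mul, map_inv, FreeGroup.lift_apply_of]
    rw [mul_inv_eq_one, mul_inv_eq_iff_eq_mul]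
    ext
    rw [Units.val_mul, Units.val_mul, uGen_val, uGen_val]
    exact mrel (SVBRel.comm (toS x) (toS y) (by rwa [toS_idx, toS_idx]))
  | rho_sq i =>
    simp only [map_mul, FreeGroup.lift_apply_of]
    ext
    exact sρ_mul_sρ i
  | braid_s i h =>
    simp only [map_mul, map_inv, FreeGroup.lift_apply_of]
    rw [mul_inv_eq_one]
    ext
    exact mrel (SVBRel.braid_s i h)
  | braid_r i h =>
    simp only [map_mul, map_inv, FreeGroup.lift_apply_of]
    rw [mul_inv_eq_one]
    ext
    exact mrel (SVBRel.braid_r i h)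
  | mixed_rs i h =>
    simp only [map_mul, map_inv, FreeGroup.lift_apply_of]
    rw [mul_inv_eq_one]
    ext
    exact mrel (SVBRel.mixed_rs i h)

/-- The retraction `VB n → SVB n` (as a monoid hom through the units). -/
def θ' : VB n →* (SVB n)ˣ := PresentedGroup.toGroup (uGen_rels (n := n))

def θ : VB n →* SVB n := (Units.coeHom (SVB n)).comp θ'

lemma θ_vσ (i : Fin (n - 1)) : θ (vσ i) = sσ i := by
  show ((θ' (vσ i) : (SVB n)ˣ) : SVB n) = _
  rw [show θ' (vσ i) = uGen (.s i) from PresentedGroup.toGroup.of _]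
  rfl

lemma θ_vσi (i : Fin (n - 1)) : θ ((vσ i)⁻¹) = sσi i := by
  show ((θ' ((vσ i)⁻¹) : (SVB n)ˣ) : SVB n) = _
  rw [map_inv, show θ' (vσ i) = uGen (.s i) from PresentedGroup.toGroup.of _]
  rfl

lemma θ_vρ (i : Fin (n - 1)) : θ (vρ i) = sρ i := by
  show ((θ' (vρ i) : (SVB n)ˣ) : SVB n) = _
  rw [show θ' (vρ i) = uGen (.r i) from PresentedGroup.toGroup.of _]
  rfl

/-- Degree (writhe) of a virtual braid generator. -/
def dval : VBGen n → ℤ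
  | .s _ => 1
  | .r _ => 0

lemma deg_rels : ∀ r ∈ {w | VBRel n w},
    FreeGroup.lift (fun x : VBGen n => Multiplicative.ofAdd (dval x)) r = 1 := by
  rintro r hr
  cases hr <;>
    · apply Multiplicative.toAdd.injective
      simp only [map_mul, map_inv, FreeGroup.lift_apply_of, toAdd_mul, toAdd_inv, toAdd_ofAdd,
        toAdd_one]
      simp [dval]
      try omega

/-- The degree homomorphism `VB n →* Multiplicative ℤ`. -/
def deg : VB n →* Multiplicative ℤ := PresentedGroup.toGroup (deg_rels (n := n))

lemma deg_vσ (i : Fin (n - 1)) : deg (vσ i) = Multiplicative.ofAdd 1 :=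
  PresentedGroup.toGroup.of _

lemma deg_vρ (i : Fin (n - 1)) : deg (vρ i) = Multiplicative.ofAdd 0 :=
  PresentedGroup.toGroup.of _

/-- Unit `2` of `ℚ`. -/
def u2 : ℚˣ := Units.mk0 2 (by norm_num)

/-- The evaluation `VB n →* ℚ` sending `σ_i` to `2` and `ρ_i` to `1`. -/
def φ₂ : VB n →* ℚ :=
  (Units.coeHom ℚ).comp (((zpowersHom ℚˣ u2).comp deg))

lemma φ₂_vσ (i : Fin (n - 1)) : φ₂ (vσ i) = 2 := by
  simp [φ₂, deg_vσ, zpowersHom_apply, u2]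

lemma φ₂_vσi (i : Fin (n - 1)) : φ₂ ((vσ i)⁻¹) = 2⁻¹ := by
  rw [map_inv, φ₂_vσ]

lemma φ₂_vρ (i : Fin (n - 1)) : φ₂ (vρ i) = 1 := by
  simp [φ₂, deg_vρ, zpowersHom_apply, u2]

/-- The trivial evaluation `VB n →* ℚ`. -/
def φ₁ : VB n →* ℚ := 1

/-- Value of a singular generator under evaluation 1. -/
def val1 : SVBGen n → ℚ
  | .t _ => 0
  | _ => 1

/-- Value of a singular generator under evaluation 2. -/
def val2 : SVBGen n → ℚ
  | .s _ => 2
  | .si _ => 2⁻¹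
  | .r _ => 1
  | .t _ => 2 - 2⁻¹

/-- Image of a singular generator in `VB n` (for `τ`-free words). -/
def gmap : SVBGen n → VB n
  | .s i => vσ i
  | .si i => (vσ i)⁻¹
  | .r i => vρ i
  | .t _ => 1

def v1 : FreeMonoid (SVBGen n) →* ℚ := FreeMonoid.lift val1
def v2 : FreeMonoid (SVBGen n) →* ℚ := FreeMonoid.lift val2
def gprod : FreeMonoid (SVBGen n) →* VB n := FreeMonoid.lift gmap

lemma v2_pos (w : FreeMonoid (SVBGen n)) : 0 < v2 w := by
  induction w with
  | one => simp [v2]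
  | of x => cases x <;> simp [v2, val2] <;> norm_num
  | mul a b ha hb => rw [map_mul]; exact mul_pos ha hb

end Aux


section Main

variable {n : ℕ}

open PresentedMonoid

lemma main_disj (η : SVB n →* MonoidAlgebra ℤ (VB n))
    (hη : ∀ i : Fin (n - 1),
      η (sσ i) = MonoidAlgebra.of ℤ (VB n) (vσ i) ∧
      η (sσi i) = MonoidAlgebra.of ℤ (VB n) ((vσ i)⁻¹) ∧
      η (sρ i) = MonoidAlgebra.of ℤ (VB n) (vρ i) ∧
      η (sτ i) = MonoidAlgebra.of ℤ (VB n) (vσ i) - MonoidAlgebra.of ℤ (VB n) ((vσ i)⁻¹))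
    (w : FreeMonoid (SVBGen n)) :
    v1 w = 0 ∨ (v1 w = 1 ∧
      η (PresentedMonoid.mk (SVBRel n) w) = MonoidAlgebra.of ℤ (VB n) (gprod w) ∧
      θ (gprod w) = PresentedMonoid.mk (SVBRel n) w) := by
  induction w with
  | one =>
    right
    refine ⟨map_one _, ?_, ?_⟩
    · rw [map_one, map_one, map_one]
      exact (map_one _).symm
    · rw [map_one, map_one]
      exact (map_one _).symm
  | of x =>
    cases x with
    | t i => left; rfl
    | s i =>
      right
      refine ⟨rfl, ?_, ?_⟩
      · show η (sσ i) = _; rw [(hη i).1]; rfl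
      · show θ (vσ i) = _; rw [θ_vσ]; rfl
    | si i =>
      right
      refine ⟨rfl, ?_, ?_⟩
      · show η (sσi i) = _; rw [(hη i).2.1]; rfl
      · show θ ((vσ i)⁻¹) = _; rw [θ_vσi]; rfl
    | r i =>
      right
      refine ⟨rfl, ?_, ?_⟩
      · show η (sρ i) = _; rw [(hη i).2.2.1]; rfl
      · show θ (vρ i) = _; rw [θ_vρ]; rfl
  | mul a b ha hb =>
    rcases ha with ha | ⟨ha1, ha2, ha3⟩
    · left; rw [map_mul, ha, zero_mul]
    rcases hb with hb | ⟨hb1, hb2, hb3⟩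
    · left; rw [map_mul, hb, mul_zero]
    right
    refine ⟨by rw [map_mul, ha1, hb1, one_mul], ?_, ?_⟩
    · rw [map_mul, map_mul, ha2, hb2, map_mul]
      exact (map_mul (MonoidAlgebra.of ℤ (VB n)) _ _).symm
    · rw [map_mul, map_mul, ha3, hb3, map_mul]

/-- The evaluation of `η (mk w)` under the algebra homs extending `φ₁`, `φ₂`. -/
lemma eval_eq (η : SVB n →* MonoidAlgebra ℤ (VB n))
    (hη : ∀ i : Fin (n - 1),
      η (sσ i) = MonoidAlgebra.of ℤ (VB n) (vσ i) ∧
      η (sσi i) = MonoidAlgebra.of ℤ (VB n) ((vσ i)⁻¹) ∧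
      η (sρ i) = MonoidAlgebra.of ℤ (VB n) (vρ i) ∧
      η (sτ i) = MonoidAlgebra.of ℤ (VB n) (vσ i) - MonoidAlgebra.of ℤ (VB n) ((vσ i)⁻¹))
    (φ : VB n →* ℚ) (v : SVBGen n → ℚ)
    (h1 : ∀ i : Fin (n - 1), φ (vσ i) = v (.s i))
    (h2 : ∀ i : Fin (n - 1), φ ((vσ i)⁻¹) = v (.si i))
    (h3 : ∀ i : Fin (n - 1), φ (vρ i) = v (.r i))
    (h4 : ∀ i : Fin (n - 1), φ (vσ i) - φ ((vσ i)⁻¹) = v (.t i))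
    (w : FreeMonoid (SVBGen n)) :
    MonoidAlgebra.lift ℤ ℚ (VB n) φ (η (PresentedMonoid.mk (SVBRel n) w))
      = FreeMonoid.lift v w := by
  induction w with
  | one => simp
  | of x =>
    cases x with
    | s i =>
      show MonoidAlgebra.lift ℤ ℚ (VB n) φ (η (sσ i)) = _
      rw [(hη i).1, MonoidAlgebra.lift_of]
      exact h1 i
    | si i =>
      show MonoidAlgebra.lift ℤ ℚ (VB n) φ (η (sσi i)) = _
      rw [(hη i).2.1, MonoidAlgebra.lift_of]
      exact h2 i
    | r i =>
      show MonoidAlgebra.lift ℤ ℚ (VB n) φ (η (sρ i)) = _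
      rw [(hη i).2.2.1, MonoidAlgebra.lift_of]
      exact h3 i
    | t i =>
      show MonoidAlgebra.lift ℤ ℚ (VB n) φ (η (sτ i)) = _
      rw [(hη i).2.2.2, map_sub, MonoidAlgebra.lift_of, MonoidAlgebra.lift_of]
      exact h4 i
  | mul a b ha hb =>
    rw [map_mul, map_mul, map_mul, map_mul, ha, hb]

end Main

/-- For `a ∈ ℤ`, the preimage of `a·1` under the desingularization map
`η̂ : SVB_n → ℤ[VB_n]` is `{1}` if `a = 1` and empty otherwise. -/
theorem etaHat_preimage_scalar (n : ℕ) (hn : 2 ≤ n)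
    (η : SVB n →* MonoidAlgebra ℤ (VB n))
    (hη : ∀ i : Fin (n - 1),
      η (sσ i) = MonoidAlgebra.of ℤ (VB n) (vσ i) ∧
      η (sσi i) = MonoidAlgebra.of ℤ (VB n) ((vσ i)⁻¹) ∧
      η (sρ i) = MonoidAlgebra.of ℤ (VB n) (vρ i) ∧
      η (sτ i) = MonoidAlgebra.of ℤ (VB n) (vσ i) - MonoidAlgebra.of ℤ (VB n) ((vσ i)⁻¹))
    (a : ℤ) :
    (⇑η) ⁻¹' {algebraMap ℤ (MonoidAlgebra ℤ (VB n)) a} =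
      if a = 1 then {1} else ∅ := by
  have key : ∀ β : SVB n, η β = algebraMap ℤ (MonoidAlgebra ℤ (VB n)) a →
      a = 1 ∧ β = 1 := by
    intro β hβ
    obtain ⟨w, rfl⟩ := PresentedMonoid.surjective_mk β
    have hev1 : (v1 w : ℚ) = (a : ℚ) := by
      have := eval_eq η hη φ₁ val1 (fun i => rfl) (fun i => rfl) (fun i => rfl)
        (fun i => by show (1 : ℚ) - 1 = 0; ring) w
      rw [hβ, AlgHom.commutes] at this
      simpa [v1] using this.symm
    have hev2 : (v2 w : ℚ) = (a : ℚ) := by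
      have := eval_eq η hη φ₂ val2 (fun i => φ₂_vσ i) (fun i => φ₂_vσi i)
        (fun i => φ₂_vρ i)
        (fun i => by rw [φ₂_vσ, φ₂_vσi]; rfl) w
      rw [hβ, AlgHom.commutes] at this
      simpa [v2] using this.symm
    rcases main_disj η hη w with h0 | ⟨h1, h2, h3⟩
    · exfalso
      have : (a : ℚ) = 0 := by rw [← hev1]; exact h0
      have h2pos := v2_pos w
      rw [hev2, this] at h2pos
      exact lt_irrefl 0 h2pos
    · have ha : a = 1 := by
        have : (a : ℚ) = 1 := by rw [← hev1]; exact h1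
        exact_mod_cast this
      refine ⟨ha, ?_⟩
      subst ha
      rw [h2] at hβ
      have h1a : algebraMap ℤ (MonoidAlgebra ℤ (VB n)) (1 : ℤ) =
          MonoidAlgebra.of ℤ (VB n) 1 := by rw [map_one, map_one]
      rw [h1a] at hβ
      have hg : gprod w = 1 := MonoidAlgebra.of_injective hβ
      rw [← h3, hg, map_one]
  split_ifs with h
  · ext β
    simp only [Set.mem_preimage, Set.mem_singleton_iff]
    constructor
    · intro hb; exact (key β hb).2
    · rintro rfl
      rw [map_one, h, map_one]
  · ext β
    simp only [Set.mem_preimage, Set.mem_singleton_iff, Set.mem_empty_iff_false,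
      iff_false]
    intro hb
    exact h (key β hb).1

end SVBPaper
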